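/- For all positive integers n, k and every partition α with at most k parts each at most n, the multiset of arm–leg pairs, computed in T*, of the cells of T*₂ equals the multiset of arm–leg pairs of the Young diagram D of α; that is, AL_{T*}(T*₂) = AL(D) as multisets of pairs. -/

import Mathlib

/-- The skew diagram with rows `a,…,b`, where row `i` contains the cells
`(i,j)` for `lo i ≤ j ≤ hi i`. -/
def skewD (a b : ℕ) (lo hi : ℕ → ℕ) : Finset (ℕ × ℕ) :=
  (Finset.Icc a b).biUnion fun i => (Finset.Icc (lo i) (hi i)).image fun j => (i, j)

/-- Arm length: number of cells of `G` in the same row, strictly to the right. -/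
def arm (G : Finset (ℕ × ℕ)) (x : ℕ × ℕ) : ℕ :=
  (G.filter fun y => y.1 = x.1 ∧ x.2 < y.2).card

/-- Leg length: number of cells of `G` in the same column, strictly below
(rows are numbered bottom to top). -/
def leg (G : Finset (ℕ × ℕ)) (x : ℕ × ℕ) : ℕ :=
  (G.filter fun y => y.2 = x.2 ∧ y.1 < x.1).card

/-- Multiset of arm–leg pairs of the cells of `E`, computed in `G`. -/
def AL (G E : Finset (ℕ × ℕ)) : Multiset (ℕ × ℕ) :=
  E.val.map fun x => (arm G x, leg G x)

/-- Multiset of hook lengths of `G`. -/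
def hookMS (G : Finset (ℕ × ℕ)) : Multiset ℕ :=
  G.val.map fun x => arm G x + leg G x + 1

/-- The skew diagram `T`. -/
def TT (n k : ℕ) (α : ℕ → ℕ) : Finset (ℕ × ℕ) :=
  skewD 1 k (fun i => α 1 - α i + 1) (fun i => n + α 1 - α i)

/-- The skew diagram `V`. -/
def VV (n k : ℕ) (α : ℕ → ℕ) : Finset (ℕ × ℕ) :=
  skewD (k + 1) (2 * k) (fun i => n + α 1 - α (i - k) + 1) (fun _ => n + α 1)

/-- The skew diagram `SQ = T ∪ V`. -/
def SQ (n k : ℕ) (α : ℕ → ℕ) : Finset (ℕ × ℕ) :=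
  TT n k α ∪ VV n k α

/-- The `k × n` rectangle `R`. -/
def RR (n k : ℕ) : Finset (ℕ × ℕ) :=
  skewD 1 k (fun _ => 1) (fun _ => n)

/-- The Young diagram `D` of `α`. -/
def DD (k : ℕ) (α : ℕ → ℕ) : Finset (ℕ × ℕ) :=
  skewD 1 k (fun _ => 1) (fun i => α (k + 1 - i))

/-- The 180° rotation `T*` of `T`. -/
def Tstar (n k : ℕ) (α : ℕ → ℕ) : Finset (ℕ × ℕ) :=
  skewD 1 k (fun i => α (k + 1 - i) - α k + 1) (fun i => n + α (k + 1 - i) - α k)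

/-- The region `T*₂` of `T*`. -/
def TstarTwo (n k : ℕ) (α : ℕ → ℕ) : Finset (ℕ × ℕ) :=
  skewD 1 k (fun _ => n - α k + 1) (fun i => n + α (k + 1 - i) - α k)

lemma mem_skewD2 {a b i j : ℕ} {lo hi : ℕ → ℕ} :
    (i, j) ∈ skewD a b lo hi ↔ a ≤ i ∧ i ≤ b ∧ lo i ≤ j ∧ j ≤ hi i := by
  simp only [skewD, Finset.mem_biUnion, Finset.mem_image, Finset.mem_Icc]
  constructor
  · rintro ⟨i', ⟨h1, h2⟩, j', ⟨h3, h4⟩, he⟩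
    obtain ⟨rfl, rfl⟩ := Prod.mk.injEq .. ▸ he
    exact ⟨h1, h2, h3, h4⟩
  · rintro ⟨h1, h2, h3, h4⟩
    exact ⟨i, ⟨h1, h2⟩, j, ⟨h3, h4⟩, rfl⟩

/-- `AL_{T*}(T*₂) = AL(D)`. -/
theorem AL_Tstar_TstarTwo_eq_AL_D (n k : ℕ) (α : ℕ → ℕ) (hn : 0 < n)
    (hk : 0 < k) (hα1 : α 1 ≤ n)
    (hmono : ∀ i j, 1 ≤ i → i ≤ j → j ≤ k → α j ≤ α i) :
    AL (Tstar n k α) (TstarTwo n k α) = AL (DD k α) (DD k α) := by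
  have hαkn : α k ≤ n := (hmono 1 k le_rfl hk le_rfl).trans hα1
  have key : ∀ i, 1 ≤ i → i ≤ k → α k ≤ α (k + 1 - i) ∧ α (k + 1 - i) ≤ n := by
    intro i h1 h2
    have h1' : 1 ≤ k + 1 - i := by omega
    have h2' : k + 1 - i ≤ k := by omega
    exact ⟨hmono _ k h1' h2' le_rfl, (hmono 1 _ le_rfl h1' h2').trans hα1⟩
  set c := n - α k with hc
  have einj : Function.Injective (fun x : ℕ × ℕ => (x.1, x.2 + c)) := by
    intro x y h
    simp only [Prod.mk.injEq] at h
    exact Prod.ext h.1 (by omega)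
  have hT2 : TstarTwo n k α = (DD k α).map ⟨fun x => (x.1, x.2 + c), einj⟩ := by
    ext ⟨x1, x2⟩
    simp only [TstarTwo, DD, mem_skewD2, Finset.mem_map, Function.Embedding.coeFn_mk]
    constructor
    · rintro ⟨h1, h2, h3, h4⟩
      obtain ⟨k1, k2⟩ := key x1 h1 h2
      refine ⟨(x1, x2 - c), mem_skewD2.mpr ⟨h1, h2, by omega, by omega⟩, ?_⟩
      simp only [Prod.mk.injEq]
      exact ⟨trivial, by omega⟩
    · rintro ⟨⟨y1, y2⟩, hy, he⟩
      rw [mem_skewD2] at hy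
      obtain ⟨h1, h2, h3, h4⟩ := hy
      simp only [Prod.mk.injEq] at he
      obtain ⟨rfl, rfl⟩ := he
      obtain ⟨k1, k2⟩ := key y1 h1 h2
      exact ⟨h1, h2, by omega, by omega⟩
  have harm : ∀ x1 x2, (x1, x2) ∈ DD k α →
      arm (Tstar n k α) (x1, x2 + c) = arm (DD k α) (x1, x2) := by
    intro x1 x2 hx
    rw [DD, mem_skewD2] at hx
    obtain ⟨h1, h2, h3, h4⟩ := hx
    unfold arm
    refine Finset.card_nbij' (fun y => (y.1, y.2 - c)) (fun y => (y.1, y.2 + c)) ?_ ?_ ?_ ?_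
    · rintro ⟨y1, y2⟩ hy
      simp only [Finset.mem_coe, Finset.mem_filter, Tstar, DD, mem_skewD2] at hy ⊢
      obtain ⟨⟨g1, g2, g3, g4⟩, g5, g6⟩ := hy
      obtain ⟨k1, k2⟩ := key y1 g1 g2
      exact ⟨⟨g1, g2, by omega, by omega⟩, g5, by omega⟩
    · rintro ⟨y1, y2⟩ hy
      simp only [Finset.mem_coe, Finset.mem_filter, Tstar, DD, mem_skewD2] at hy ⊢
      obtain ⟨⟨g1, g2, g3, g4⟩, g5, g6⟩ := hy
      obtain ⟨k1, k2⟩ := key y1 g1 g2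
      exact ⟨⟨g1, g2, by omega, by omega⟩, g5, by omega⟩
    · rintro ⟨y1, y2⟩ hy
      simp only [Finset.mem_coe, Finset.mem_filter, Tstar, mem_skewD2] at hy
      obtain ⟨⟨g1, g2, g3, g4⟩, g5, g6⟩ := hy
      simp only [Prod.mk.injEq]
      exact ⟨trivial, by omega⟩
    · rintro ⟨y1, y2⟩ _
      simp only [Prod.mk.injEq]
      exact ⟨trivial, by omega⟩
  have hleg : ∀ x1 x2, (x1, x2) ∈ DD k α →
      leg (Tstar n k α) (x1, x2 + c) = leg (DD k α) (x1, x2) := by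
    intro x1 x2 hx
    rw [DD, mem_skewD2] at hx
    obtain ⟨h1, h2, h3, h4⟩ := hx
    unfold leg
    refine Finset.card_nbij' (fun y => (y.1, y.2 - c)) (fun y => (y.1, y.2 + c)) ?_ ?_ ?_ ?_
    · rintro ⟨y1, y2⟩ hy
      simp only [Finset.mem_coe, Finset.mem_filter, Tstar, DD, mem_skewD2] at hy ⊢
      obtain ⟨⟨g1, g2, g3, g4⟩, g5, g6⟩ := hy
      obtain ⟨k1, k2⟩ := key y1 g1 g2
      exact ⟨⟨g1, g2, by omega, by omega⟩, by omega, g6⟩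
    · rintro ⟨y1, y2⟩ hy
      simp only [Finset.mem_coe, Finset.mem_filter, Tstar, DD, mem_skewD2] at hy ⊢
      obtain ⟨⟨g1, g2, g3, g4⟩, g5, g6⟩ := hy
      obtain ⟨k1, k2⟩ := key y1 g1 g2
      exact ⟨⟨g1, g2, by omega, by omega⟩, by omega, g6⟩
    · rintro ⟨y1, y2⟩ hy
      simp only [Finset.mem_coe, Finset.mem_filter, Tstar, mem_skewD2] at hy
      obtain ⟨⟨g1, g2, g3, g4⟩, g5, g6⟩ := hy
      simp only [Prod.mk.injEq]
      exact ⟨trivial, by omega⟩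
    · rintro ⟨y1, y2⟩ _
      simp only [Prod.mk.injEq]
      exact ⟨trivial, by omega⟩
  rw [AL, AL, hT2, Finset.map_val, Multiset.map_map]
  refine Multiset.map_congr rfl ?_
  rintro ⟨x1, x2⟩ hx
  have hx' : (x1, x2) ∈ DD k α := hx
  simp only [Function.comp_apply, Function.Embedding.coeFn_mk]
  rw [harm x1 x2 hx', hleg x1 x2 hx']
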